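/- There exist a sequence (Φ_n) of homomorphisms from [ω]^{<ω} to Z/2Z and a function H : Hom([ω]^{<ω}, Z/2Z) → ω such that for every n, the family consisting of the complement of Ker(Φ_n) together with all Ker(Φ) with H(Φ) ≤ n is centered (every finite subfamily has nonempty, indeed infinite, intersection). Specifically, one may take (Φ_n) to be any countable linearly independent family in the dual space and H(Φ) the least n with Φ ∈ span{Φ_i : i < n} ⊕ W, where W is a complement of span{Φ_n : n ∈ ω} in Hom([ω]^{<ω}, Z/2Z). -/

import Mathlib

open Submodule LinearMap

private noncomputable def ee (n : ℕ) : (ℕ →₀ ZMod 2) →ₗ[ZMod 2] ZMod 2 := Finsupp.lapply n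

private lemma ee_single (k n : ℕ) : ee k (Finsupp.single n 1) = if n = k then 1 else 0 := by
  simp [ee, Finsupp.single_apply]

private lemma ee_not_mem_span (n : ℕ) : ee n ∉ span (ZMod 2) (ee '' Set.Iio n) := by
  intro h
  have key : ∀ f ∈ span (ZMod 2) (ee '' Set.Iio n), f (Finsupp.single n 1) = 0 := by
    intro f hf
    induction hf using Submodule.span_induction with
    | mem f hf => obtain ⟨k, hk, rfl⟩ := hf; simp [ee_single, (Set.mem_Iio.mp hk).ne']
    | zero => simp
    | add f g _ _ hf hg => simp [hf, hg]
    | smul c f _ hf => simp [hf]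
  have := key _ h
  simp [ee_single] at this

theorem stmt18 :
    ∃ (Φ : ℕ → ((ℕ →₀ ZMod 2) →+ ZMod 2))
      (H : ((ℕ →₀ ZMod 2) →+ ZMod 2) → ℕ),
      ∀ n : ℕ, ∀ S : Finset ((ℕ →₀ ZMod 2) →+ ZMod 2),
        (∀ Ψ ∈ S, H Ψ ≤ n) →
        ({x | Φ n x ≠ 0} ∩ ⋂ Ψ ∈ S, {x | Ψ x = 0}).Infinite := by
  classical
  -- complement of the span of the coordinate functionals
  obtain ⟨W, hW⟩ := (span (ZMod 2) (Set.range ee)).exists_isCompl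
  set U : ℕ → Submodule (ZMod 2) ((ℕ →₀ ZMod 2) →ₗ[ZMod 2] ZMod 2) :=
    fun n => span (ZMod 2) (ee '' Set.Iio n) ⊔ W with hU
  have Umono : Monotone U := by
    intro a b hab
    exact sup_le_sup_right (span_mono (Set.image_mono (Set.Iio_subset_Iio hab))) W
  -- e n is not in U n
  have heU : ∀ n, ee n ∉ U n := by
    intro n hn
    rw [hU] at hn
    obtain ⟨v, hv, w, hw, hvw⟩ := Submodule.mem_sup.mp hn
    have hwV : w ∈ span (ZMod 2) (Set.range ee) := by
      have : w = ee n - v := by rw [← hvw]; abel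
      rw [this]
      exact Submodule.sub_mem _ (subset_span (Set.mem_range_self n))
        (span_mono (Set.image_subset_range _ _) hv)
    have : w = 0 := by
      have := hW.inf_eq_bot
      have hm : w ∈ span (ZMod 2) (Set.range ee) ⊓ W := ⟨hwV, hw⟩
      rwa [this, Submodule.mem_bot] at hm
    rw [this, add_zero] at hvw
    exact ee_not_mem_span n (hvw ▸ hv)
  -- every functional lies in some U n
  have hex : ∀ Ψ : ((ℕ →₀ ZMod 2) →+ ZMod 2), ∃ n, Ψ.toZModLinearMap 2 ∈ U n := by
    intro Ψ
    have htop : Ψ.toZModLinearMap 2 ∈ span (ZMod 2) (Set.range ee) ⊔ W := by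
      rw [hW.sup_eq_top]; trivial
    obtain ⟨v, hv, w, hw, hvw⟩ := Submodule.mem_sup.mp htop
    have : v ∈ ⨆ n, span (ZMod 2) (ee '' Set.Iio n) := by
      have : Set.range ee = ⋃ n, ee '' Set.Iio n := by
        ext f; simp only [Set.mem_range, Set.mem_iUnion, Set.mem_image, Set.mem_Iio]
        constructor
        · rintro ⟨k, rfl⟩; exact ⟨k + 1, k, Nat.lt_succ_self k, rfl⟩
        · rintro ⟨_, k, _, rfl⟩; exact ⟨k, rfl⟩
      rw [this, Submodule.span_iUnion] at hv
      exact hv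
    obtain ⟨n, hn⟩ := Submodule.mem_iSup_of_directed _
      (Monotone.directed_le fun a b hab =>
        span_mono (Set.image_mono (Set.Iio_subset_Iio hab))) |>.mp this
    exact ⟨n, by rw [← hvw]; exact Submodule.add_mem_sup hn hw⟩
  refine ⟨fun n => (ee n).toAddMonoidHom, fun Ψ => Nat.find (hex Ψ), ?_⟩
  intro n S hS
  -- all members of S are in U n
  have hSU : ∀ Ψ ∈ S, Ψ.toZModLinearMap 2 ∈ U n :=
    fun Ψ hΨ => Umono (hS Ψ hΨ) (Nat.find_spec (hex Ψ))
  -- find a point x0 with ee n x0 = 1 and Ψ x0 = 0 for Ψ ∈ S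
  have hx0 : ∃ x0, ee n x0 = 1 ∧ ∀ Ψ ∈ S, Ψ x0 = 0 := by
    by_contra hcon
    push_neg at hcon
    have hker : ⨅ Ψ : S, ker ((Ψ : ((ℕ →₀ ZMod 2) →+ ZMod 2)).toZModLinearMap 2) ≤ ker (ee n) := by
      intro x hx
      simp only [Submodule.mem_iInf, mem_ker] at hx ⊢
      by_contra hne
      have h1 : ee n x = 1 := by
        have : ∀ a : ZMod 2, a ≠ 0 → a = 1 := by decide
        exact this _ hne
      obtain ⟨Ψ, hΨ, hΨx⟩ := hcon x h1
      exact hΨx (hx ⟨Ψ, hΨ⟩)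
    have : ee n ∈ span (ZMod 2)
        (Set.range fun Ψ : S => (Ψ : ((ℕ →₀ ZMod 2) →+ ZMod 2)).toZModLinearMap 2) :=
      mem_span_of_iInf_ker_le_ker hker
    refine heU n (span_le.mpr ?_ this)
    rintro f ⟨⟨Ψ, hΨ⟩, rfl⟩
    exact hSU Ψ hΨ
  obtain ⟨x0, hx01, hx0S⟩ := hx0
  -- the linear map recording all values
  set F : (ℕ →₀ ZMod 2) →ₗ[ZMod 2] (ZMod 2 × (S → ZMod 2)) :=
    LinearMap.prod (ee n) (LinearMap.pi fun Ψ : S => (Ψ : ((ℕ →₀ ZMod 2) →+ ZMod 2)).toZModLinearMap 2)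
    with hF
  -- kernel of F is infinite
  have hkerinf : (ker F : Set (ℕ →₀ ZMod 2)).Infinite := by
    by_contra hfin
    rw [Set.not_infinite] at hfin
    have hfib : ∀ v : ZMod 2 × (S → ZMod 2), (F ⁻¹' {v}).Finite := by
      intro v
      rcases Set.eq_empty_or_nonempty (F ⁻¹' {v}) with h | ⟨y0, hy0⟩
      · simp [h]
      · have : F ⁻¹' {v} ⊆ (y0 + ·) '' (ker F : Set (ℕ →₀ ZMod 2)) := by
          intro y hy
          refine ⟨y - y0, ?_, by simp⟩
          simp only [SetLike.mem_coe, mem_ker, map_sub]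
          rw [Set.mem_preimage, Set.mem_singleton_iff] at hy hy0
          rw [hy, hy0, sub_self]
        exact ((hfin.image _).subset this)
    have : (Set.univ : Set (ℕ →₀ ZMod 2)).Finite := by
      have : (Set.univ : Set (ℕ →₀ ZMod 2)) = ⋃ v : ZMod 2 × (S → ZMod 2), F ⁻¹' {v} := by
        ext x; simp
      rw [this]
      exact Set.finite_iUnion hfib
    exact Set.infinite_univ this
  -- translate the kernel into the target set
  refine Set.Infinite.mono ?_ (hkerinf.image (Set.injOn_of_injective (add_right_injective x0)))
  rintro _ ⟨y, hy, rfl⟩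
  simp only [SetLike.mem_coe, mem_ker, hF, LinearMap.prod_apply, Function.prod, Prod.mk_eq_zero] at hy
  obtain ⟨hy1, hy2⟩ := hy
  constructor
  · show (ee n).toAddMonoidHom (x0 + y) ≠ 0
    simp only [LinearMap.toAddMonoidHom_coe, map_add, hx01, hy1, add_zero]
    exact one_ne_zero
  · simp only [Set.mem_iInter, Set.mem_setOf_eq]
    intro Ψ hΨ
    have := congrFun hy2 ⟨Ψ, hΨ⟩
    simp only [LinearMap.pi_apply, Pi.zero_apply] at this
    have hΨy : Ψ y = 0 := this
    rw [map_add, hx0S Ψ hΨ, hΨy, add_zero]
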